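/- For an odd prime p, the nonabelian group of order p³ and exponent p is morphic. -/

import Mathlib

/-- A group is morphic if for every pair of normal subgroups `N₁, N₂`,
`G/N₁ ≅ N₂` holds if and only if `G/N₂ ≅ N₁`. -/
def IsMorphic (G : Type*) [Group G] : Prop :=
  ∀ N₁ N₂ : Subgroup G, ∀ _h₁ : N₁.Normal, ∀ _h₂ : N₂.Normal,
    (Nonempty ((G ⧸ N₁) ≃* N₂) ↔ Nonempty ((G ⧸ N₂) ≃* N₁))

/-- The Heisenberg group over `ZMod p`: for `p` an odd prime this is the
nonabelian group of order `p ^ 3` and exponent `p`. -/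
@[ext]
structure Heisenberg (p : ℕ) where
  x : ZMod p
  y : ZMod p
  z : ZMod p

namespace Heisenberg

variable {p : ℕ}

instance : Mul (Heisenberg p) :=
  ⟨fun a b => ⟨a.x + b.x, a.y + b.y, a.z + b.z + a.x * b.y⟩⟩

instance : One (Heisenberg p) := ⟨⟨0, 0, 0⟩⟩

instance : Inv (Heisenberg p) := ⟨fun a => ⟨-a.x, -a.y, -a.z + a.x * a.y⟩⟩

theorem mul_def (a b : Heisenberg p) :
    a * b = ⟨a.x + b.x, a.y + b.y, a.z + b.z + a.x * b.y⟩ := rfl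

theorem one_def : (1 : Heisenberg p) = ⟨0, 0, 0⟩ := rfl

theorem inv_def (a : Heisenberg p) : a⁻¹ = ⟨-a.x, -a.y, -a.z + a.x * a.y⟩ := rfl

instance : Group (Heisenberg p) where
  mul_assoc a b c := by ext <;> simp [mul_def] <;> ring
  one_mul a := by ext <;> simp [mul_def, one_def]
  mul_one a := by ext <;> simp [mul_def, one_def]
  inv_mul_cancel a := by ext <;> simp [mul_def, one_def, inv_def] <;> ring

end Heisenberg

section AuxVS

variable {p : ℕ}

lemma addEquiv_of_card_eq' [Fact p.Prime] (A₁ A₂ : Type*) [AddCommGroup A₁] [AddCommGroup A₂]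
    [Finite A₁] [Finite A₂] [Module (ZMod p) A₁] [Module (ZMod p) A₂]
    (h : Nat.card A₁ = Nat.card A₂) : Nonempty (A₁ ≃+ A₂) := by
  have hp := (Fact.out : p.Prime)
  letI : Fintype A₁ := Fintype.ofFinite _
  letI : Fintype A₂ := Fintype.ofFinite _
  letI : Fintype (ZMod p) := @ZMod.fintype p ⟨hp.pos.ne'⟩
  have hc1 : Fintype.card A₁ = (Fintype.card (ZMod p)) ^ Module.finrank (ZMod p) A₁ :=
    Module.card_eq_pow_finrank
  have hc2 : Fintype.card A₂ = (Fintype.card (ZMod p)) ^ Module.finrank (ZMod p) A₂ :=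
    Module.card_eq_pow_finrank
  have hK : Fintype.card A₁ = Fintype.card A₂ := by
    rw [← Nat.card_eq_fintype_card, ← Nat.card_eq_fintype_card, h]
  rw [hc1, hc2, ZMod.card p] at hK
  have hfr : Module.finrank (ZMod p) A₁ = Module.finrank (ZMod p) A₂ :=
    Nat.pow_right_injective hp.two_le hK
  obtain ⟨e⟩ := FiniteDimensional.nonempty_linearEquiv_of_finrank_eq hfr
  exact ⟨e.toAddEquiv⟩

/-- Any two finite commutative groups of exponent dividing a prime `p` with equal
cardinality are isomorphic (both are `ZMod p`-vector spaces). -/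
lemma mulEquiv_of_card_eq' [Fact p.Prime] {K₁ K₂ : Type*} [Group K₁] [Group K₂]
    [Finite K₁] [Finite K₂] (c₁ : ∀ a b : K₁, a * b = b * a) (c₂ : ∀ a b : K₂, a * b = b * a)
    (e₁ : ∀ g : K₁, g ^ p = 1) (e₂ : ∀ g : K₂, g ^ p = 1)
    (h : Nat.card K₁ = Nat.card K₂) : Nonempty (K₁ ≃* K₂) := by
  letI : CommGroup K₁ := { (inferInstance : Group K₁) with mul_comm := c₁ }
  letI : CommGroup K₂ := { (inferInstance : Group K₂) with mul_comm := c₂ }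
  letI m₁ : Module (ZMod p) (Additive K₁) := AddCommGroup.zmodModule (fun x => e₁ x.toMul)
  letI m₂ : Module (ZMod p) (Additive K₂) := AddCommGroup.zmodModule (fun x => e₂ x.toMul)
  haveI : Finite (Additive K₁) := Finite.of_equiv _ Additive.ofMul
  haveI : Finite (Additive K₂) := Finite.of_equiv _ Additive.ofMul
  have hcard : Nat.card (Additive K₁) = Nat.card (Additive K₂) := by
    rw [Nat.card_congr Additive.ofMul.symm, Nat.card_congr Additive.ofMul.symm, h]
  obtain ⟨e⟩ := @addEquiv_of_card_eq' p _ (Additive K₁) (Additive K₂) _ _ _ _ m₁ m₂ hcard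
  exact ⟨MulEquiv.toAdditive.symm e⟩

/-- A group of order `p` or `p ^ 2` is commutative. -/
lemma comm_of_card' [Fact p.Prime] {K : Type*} [Group K]
    (h : Nat.card K = p ∨ Nat.card K = p ^ 2) : ∀ a b : K, a * b = b * a := by
  rcases h with h | h
  · haveI := isCyclic_of_prime_card h
    exact (IsCyclic.commGroup (α := K)).mul_comm
  · exact IsPGroup.commutative_of_card_eq_prime_sq h

end AuxVS

namespace Heisenberg

variable {p : ℕ}

theorem pow_formula (a : Heisenberg p) (n : ℕ) :
    a ^ n = ⟨(n : ZMod p) * a.x, (n : ZMod p) * a.y,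
      (n : ZMod p) * a.z + (n.choose 2 : ZMod p) * (a.x * a.y)⟩ := by
  induction n with
  | zero => ext <;> simp [one_def]
  | succ n ih =>
      rw [pow_succ, ih]
      ext <;> simp [mul_def, Nat.choose_succ_succ, Nat.cast_add] <;> ring

theorem exponent_p (hp : p.Prime) (hodd : Odd p) (a : Heisenberg p) : a ^ p = 1 := by
  have h2 : p ∣ p.choose 2 := hp.dvd_choose_self (by norm_num) (by
    rcases hodd with ⟨k, hk⟩
    have := hp.two_le
    omega)
  rw [pow_formula]
  ext <;> simp [one_def, ZMod.natCast_self, (ZMod.natCast_eq_zero_iff _ _).mpr h2]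

/-- `Heisenberg p` is in bijection with `(ZMod p)³`. -/
def equivProd : Heisenberg p ≃ ZMod p × ZMod p × ZMod p where
  toFun a := (a.x, a.y, a.z)
  invFun t := ⟨t.1, t.2.1, t.2.2⟩
  left_inv _ := rfl
  right_inv _ := rfl

theorem card_heis (hp : p.Prime) : Nat.card (Heisenberg p) = p ^ 3 := by
  haveI : NeZero p := ⟨hp.pos.ne'⟩
  rw [Nat.card_congr equivProd, Nat.card_prod, Nat.card_prod, Nat.card_zmod]
  ring

end Heisenberg

/-- For an odd prime `p`, the nonabelian group of order `p ^ 3` and exponent `p`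
(the Heisenberg group over `𝔽_p`) is morphic. -/

theorem heisenberg_isMorphic (p : ℕ) (hp : p.Prime) (hodd : Odd p) :
    IsMorphic (Heisenberg p) := by
  haveI : Fact p.Prime := ⟨hp⟩
  haveI : NeZero p := ⟨hp.pos.ne'⟩
  haveI : Finite (Heisenberg p) := Finite.of_equiv _ Heisenberg.equivProd.symm
  have hG : Nat.card (Heisenberg p) = p ^ 3 := Heisenberg.card_heis hp
  have expG : ∀ a : (Heisenberg p), a ^ p = 1 := Heisenberg.exponent_p hp hodd
  suffices H : ∀ N₁ N₂ : Subgroup (Heisenberg p), ∀ _h₁ : N₁.Normal, ∀ _h₂ : N₂.Normal,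
      Nonempty (((Heisenberg p) ⧸ N₁) ≃* N₂) → Nonempty (((Heisenberg p) ⧸ N₂) ≃* N₁) by
    intro N₁ N₂ h₁ h₂
    exact ⟨H N₁ N₂ h₁ h₂, H N₂ N₁ h₂ h₁⟩
  intro N₁ N₂ h₁ h₂ he
  obtain ⟨e⟩ := he
  have lag₁ : Nat.card (Heisenberg p) = Nat.card ((Heisenberg p) ⧸ N₁) * Nat.card N₁ :=
    Subgroup.card_eq_card_quotient_mul_card_subgroup N₁
  have lag₂ : Nat.card (Heisenberg p) = Nat.card ((Heisenberg p) ⧸ N₂) * Nat.card N₂ :=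
    Subgroup.card_eq_card_quotient_mul_card_subgroup N₂
  have hc2 : Nat.card N₂ = Nat.card ((Heisenberg p) ⧸ N₁) := (Nat.card_congr e.toEquiv).symm
  have hprod : Nat.card N₂ * Nat.card N₁ = p ^ 3 := by rw [hc2, ← lag₁, hG]
  have hpos₂ : 0 < Nat.card N₂ := Nat.card_pos
  have hq₂ : Nat.card ((Heisenberg p) ⧸ N₂) = Nat.card N₁ := by
    apply Nat.eq_of_mul_eq_mul_right hpos₂
    rw [← lag₂, hG, ← hprod]; ring
  have hdvd : Nat.card N₁ ∣ p ^ 3 := ⟨Nat.card N₂, by rw [← hprod]; ring⟩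
  obtain ⟨k, hk3, hcard₁⟩ := (Nat.dvd_prime_pow hp).mp hdvd
  -- exponent-p facts for the subgroup and quotient involved
  have expN : ∀ g : N₁, g ^ p = 1 := fun g => by
    apply Subtype.ext
    rw [SubgroupClass.coe_pow, expG]; rfl
  have expQ : ∀ q : (Heisenberg p) ⧸ N₂, q ^ p = 1 := fun q => by
    induction q using QuotientGroup.induction_on with
    | H g =>
        have : ((QuotientGroup.mk' N₂) g) ^ p = 1 := by
          rw [← map_pow, expG, map_one]
        simpa using this
  interval_cases k
  · -- `N₁ = ⊥`, `N₂ = ⊤`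
    have hbot : N₁ = ⊥ := Subgroup.card_eq_one.mp (by simpa using hcard₁)
    have htop : N₂ = ⊤ := Subgroup.eq_top_of_card_eq _ (by
      rw [pow_zero] at hcard₁
      rw [hcard₁, mul_one] at hprod
      rw [hG, hprod])
    subst hbot; subst htop
    haveI : Unique ((Heisenberg p) ⧸ (⊤ : Subgroup (Heisenberg p))) := by
      haveI := QuotientGroup.subsingleton_quotient_top (G := Heisenberg p)
      exact ⟨⟨1⟩, fun a => Subsingleton.elim a 1⟩
    haveI : Unique (⊥ : Subgroup (Heisenberg p)) := ⟨⟨1⟩, fun a => Subtype.ext ((Subgroup.mem_bot).mp a.2)⟩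
    exact ⟨MulEquiv.ofUnique⟩
  · -- `|N₁| = p`, `|N₂| = p²`
    have hcq : Nat.card ((Heisenberg p) ⧸ N₂) = p ^ 1 := hq₂.trans hcard₁
    refine mulEquiv_of_card_eq' (comm_of_card' (Or.inl (by simpa using hcq)))
      (comm_of_card' (Or.inl (by simpa using hcard₁))) expQ expN hq₂
  · -- `|N₁| = p²`, `|N₂| = p`
    refine mulEquiv_of_card_eq' (comm_of_card' (Or.inr (hq₂.trans hcard₁)))
      (comm_of_card' (Or.inr hcard₁)) expQ expN hq₂
  · -- `N₁ = ⊤`, `N₂ = ⊥`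
    have htop : N₁ = ⊤ := Subgroup.eq_top_of_card_eq _ (by rw [hcard₁, hG])
    have hbot : N₂ = ⊥ := Subgroup.card_eq_one.mp (by
      rw [hcard₁] at hprod
      have hp3 : 0 < p ^ 3 := pow_pos hp.pos 3
      exact Nat.eq_of_mul_eq_mul_right hp3 (by simpa using hprod))
    subst htop; subst hbot
    exact ⟨QuotientGroup.quotientBot.trans Subgroup.topEquiv.symm⟩
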